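/- (Primal–dual equivalence of the backward-pass LMI, Section 4.2.) Let n, m, d be natural numbers. Let P be a symmetric invertible real (1+n)×(1+n) matrix, and let M and Q be symmetric invertible real (1+n+m+d)×(1+n+m+d) matrices, each partitioned into block rows and columns of sizes 1, n, m, d (blocks indexed 1 to 4). Let k¹ ∈ ℝᵐ, K² a real m×n matrix. Let rev(X) denote the matrix obtained from a (1+n+m+d)×(1+n+m+d) matrix X by simultaneously permuting its rows and columns so that the four blocks appear in reversed order (d, m, n, 1). Let 𝒫 be the block-diagonal matrix with diagonal blocks −P, rev(M), Q (of sizes 1+n, 1+n+m+d, 1+n+m+d). Let W be the ((m+n+1)+(1+n+m+d))×(1+n+d) real matrix whose row blocks, acting on (τ,a,b) ∈ ℝ×ℝⁿ×ℝᵈ, are in order: (k¹, K², 0); (0, I_n, 0); (1, 0, 0); (1, 0, 0); (0, I_n, 0); (k¹, K², 0); (0, 0, I_d), and let 𝒲 be the vertical stack of the identity I_{1+n+d} on top of W. Assume the regularity condition: the leading principal (1+n+m)×(1+n+m) submatrix of M is positive definite and Q is positive definite. Then the primal matrix inequality [𝒲ᵀ𝒫𝒲 is negative definite] holds if and only if all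 of the following hold: (a) 𝒟ᵀ𝒫⁻¹𝒟 is positive definite, where 𝒟 is the vertical stack of Wᵀ on top of −I_{(m+n+1)+(1+n+m+d)}; (b) P⁻¹ is positive definite; and (c) the trailing principal d×d block (the (4,4) block) of M⁻¹ is negative definite. -/

import Mathlib

open Matrix

/-- Index type of a `(1+n+m+d)` vector with block order `(1, n, m, d)`. -/
abbrev Idx (n m d : ℕ) := Unit ⊕ (Fin n ⊕ (Fin m ⊕ Fin d))

/-- Index type of a `(1+n+m+d)` vector with the reversed block order `(d, m, n, 1)`. -/
abbrev RevIdx (n m d : ℕ) := Fin d ⊕ (Fin m ⊕ (Fin n ⊕ Unit))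

/-- Index type for `η = (1, δx)`, of size `1+n`. -/
abbrev EtaIdx (n : ℕ) := Unit ⊕ Fin n

/-- Index type for `(τ, a, b) ∈ ℝ × ℝⁿ × ℝᵈ`, of size `1+n+d`. -/
abbrev TabIdx (n d : ℕ) := Unit ⊕ (Fin n ⊕ Fin d)

/-- Row index type of the matrix `W`: seven row blocks of sizes
`m, n, 1, 1, n, m, d`. -/
abbrev WIdx (n m d : ℕ) := (Fin m ⊕ (Fin n ⊕ Unit)) ⊕ Idx n m d

/-- Index type of the block-diagonal matrix `𝒫 = diag(-P, rev(M), Q)`,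
written as `(1+n+d) + ((m+n+1) + (1+n+m+d))` to match the row structure of
`𝒲 = [I; W]`. -/
abbrev OmIdx (n m d : ℕ) := TabIdx n d ⊕ WIdx n m d

/-- The block reversal map: sends an index of the `(d,m,n,1)`-ordered vector to
the corresponding index of the `(1,n,m,d)`-ordered vector. -/
def flipIdx {n m d : ℕ} : RevIdx n m d → Idx n m d
  | Sum.inl p => Sum.inr (Sum.inr (Sum.inr p))
  | Sum.inr (Sum.inl p) => Sum.inr (Sum.inr (Sum.inl p))
  | Sum.inr (Sum.inr (Sum.inl p)) => Sum.inr (Sum.inl p)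
  | Sum.inr (Sum.inr (Sum.inr u)) => Sum.inl u

/-- `rev(X)`: simultaneous permutation of rows and columns of `X` so that the
four blocks appear in reversed order `(d, m, n, 1)`. -/
def revMat {n m d : ℕ} (X : Matrix (Idx n m d) (Idx n m d) ℝ) :
    Matrix (RevIdx n m d) (RevIdx n m d) ℝ :=
  X.submatrix flipIdx flipIdx

/-- The identification of `OmIdx` with the index type of
`diag(-P, rev(M), Q)` partitioned as `(1+n) + ((1+n+m+d) + (1+n+m+d))`. -/
def phiIdx {n m d : ℕ} : OmIdx n m d → EtaIdx n ⊕ (RevIdx n m d ⊕ Idx n m d)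
  | Sum.inl (Sum.inl u) => Sum.inl (Sum.inl u)
  | Sum.inl (Sum.inr (Sum.inl a)) => Sum.inl (Sum.inr a)
  | Sum.inl (Sum.inr (Sum.inr b)) => Sum.inr (Sum.inl (Sum.inl b))
  | Sum.inr (Sum.inl v) => Sum.inr (Sum.inl (Sum.inr v))
  | Sum.inr (Sum.inr q) => Sum.inr (Sum.inr q)

/-- The block-diagonal matrix `𝒫 = diag(-P, rev(M), Q)`, reindexed along the
row structure of `𝒲`. -/
def calP {n m d : ℕ} (P : Matrix (EtaIdx n) (EtaIdx n) ℝ)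
    (M Q : Matrix (Idx n m d) (Idx n m d) ℝ) :
    Matrix (OmIdx n m d) (OmIdx n m d) ℝ :=
  (fromBlocks (-P) 0 0 (fromBlocks (revMat M) 0 0 Q)).submatrix phiIdx phiIdx

/-- The matrix `W` whose row blocks, acting on `(τ,a,b)`, are in order:
`(k¹,K²,0); (0,I_n,0); (1,0,0); (1,0,0); (0,I_n,0); (k¹,K²,0); (0,0,I_d)`. -/
def Wmat {n m d : ℕ} (k1 : Fin m → ℝ) (K2 : Matrix (Fin m) (Fin n) ℝ) :
    Matrix (WIdx n m d) (TabIdx n d) ℝ :=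
  Matrix.of fun r c =>
    match r, c with
    | Sum.inl (Sum.inl i), Sum.inl _ => k1 i
    | Sum.inl (Sum.inl i), Sum.inr (Sum.inl j) => K2 i j
    | Sum.inl (Sum.inl _), Sum.inr (Sum.inr _) => 0
    | Sum.inl (Sum.inr (Sum.inl i)), Sum.inr (Sum.inl j) => if i = j then (1 : ℝ) else 0
    | Sum.inl (Sum.inr (Sum.inl _)), _ => 0
    | Sum.inl (Sum.inr (Sum.inr _)), Sum.inl _ => 1
    | Sum.inl (Sum.inr (Sum.inr _)), _ => 0
    | Sum.inr (Sum.inl _), Sum.inl _ => 1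
    | Sum.inr (Sum.inl _), _ => 0
    | Sum.inr (Sum.inr (Sum.inl i)), Sum.inr (Sum.inl j) => if i = j then (1 : ℝ) else 0
    | Sum.inr (Sum.inr (Sum.inl _)), _ => 0
    | Sum.inr (Sum.inr (Sum.inr (Sum.inl i))), Sum.inl _ => k1 i
    | Sum.inr (Sum.inr (Sum.inr (Sum.inl i))), Sum.inr (Sum.inl j) => K2 i j
    | Sum.inr (Sum.inr (Sum.inr (Sum.inl _))), Sum.inr (Sum.inr _) => 0
    | Sum.inr (Sum.inr (Sum.inr (Sum.inr i))), Sum.inr (Sum.inr j) => if i = j then (1 : ℝ) else 0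
    | Sum.inr (Sum.inr (Sum.inr (Sum.inr _))), _ => 0

/-- `𝒲`: the vertical stack of the identity `I_{1+n+d}` on top of `W`. -/
def calW {n m d : ℕ} (k1 : Fin m → ℝ) (K2 : Matrix (Fin m) (Fin n) ℝ) :
    Matrix (OmIdx n m d) (TabIdx n d) ℝ :=
  fromRows (1 : Matrix (TabIdx n d) (TabIdx n d) ℝ) (Wmat k1 K2)

/-- `𝒟`: the vertical stack of `Wᵀ` on top of `-I`. -/
def calD {n m d : ℕ} (k1 : Fin m → ℝ) (K2 : Matrix (Fin m) (Fin n) ℝ) :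
    Matrix (OmIdx n m d) (WIdx n m d) ℝ :=
  fromRows (Wmat k1 K2)ᵀ (-(1 : Matrix (WIdx n m d) (WIdx n m d) ℝ))

/-- Embedding of the leading principal `(1+n+m)` block of a `(1+n+m+d)`-indexed
matrix. -/
def leadIdx {n m d : ℕ} : (Unit ⊕ (Fin n ⊕ Fin m)) → Idx n m d
  | Sum.inl u => Sum.inl u
  | Sum.inr (Sum.inl p) => Sum.inr (Sum.inl p)
  | Sum.inr (Sum.inr p) => Sum.inr (Sum.inr (Sum.inl p))

/-- Embedding of the trailing principal `d×d` (the `(4,4)`) block of a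
`(1+n+m+d)`-indexed matrix. -/
def tailIdx {n m d : ℕ} : Fin d → Idx n m d :=
  fun i => Sum.inr (Sum.inr (Sum.inr i))


namespace BPPD
open Matrix

variable {N ι ι₁ ι₂ ι₃ : Type*}


variable {N ι ι₁ ι₂ ι₃ : Type*}

lemma star_pi [Fintype N] (x : N → ℝ) : star x = x := by
  funext i; simp

lemma posDef_of [Fintype N] (A : Matrix N N ℝ) (h1 : Aᵀ = A)
    (h2 : ∀ x : N → ℝ, x ≠ 0 → 0 < x ⬝ᵥ A *ᵥ x) : A.PosDef := by
  refine Matrix.posDef_iff_dotProduct_mulVec.mpr ⟨Matrix.IsHermitian.ext fun i j => ?_, fun x hx => by rw [star_pi]; exact h2 x hx⟩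
  have := congrFun (congrFun h1 j) i
  simpa using this.symm

lemma posDef_apply [Fintype N] {A : Matrix N N ℝ} (h : A.PosDef) (x : N → ℝ) (hx : x ≠ 0) :
    0 < x ⬝ᵥ A *ᵥ x := by
  have := (Matrix.posDef_iff_dotProduct_mulVec.mp h).2 hx; rwa [star_pi] at this

lemma posSemidef_apply [Fintype N] {A : Matrix N N ℝ} (h : A.PosSemidef) (x : N → ℝ) :
    0 ≤ x ⬝ᵥ A *ᵥ x := by
  have := (Matrix.posSemidef_iff_dotProduct_mulVec.mp h).2 x; rwa [star_pi] at this

lemma dot_symm [Fintype N] (A : Matrix N N ℝ) (hA : Aᵀ = A) (u w : N → ℝ) :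
    u ⬝ᵥ A *ᵥ w = w ⬝ᵥ A *ᵥ u := by
  rw [Matrix.dotProduct_mulVec]
  conv_lhs => rw [← hA]
  rw [Matrix.vecMul_transpose, dotProduct_comm]

lemma qf_congr [Fintype N] [Fintype ι] (A : Matrix N N ℝ) (U : Matrix N ι ℝ) (x : ι → ℝ) :
    x ⬝ᵥ (Uᵀ * A * U) *ᵥ x = (U *ᵥ x) ⬝ᵥ A *ᵥ (U *ᵥ x) := by
  rw [← Matrix.mulVec_mulVec, ← Matrix.mulVec_mulVec, Matrix.dotProduct_mulVec,
    Matrix.vecMul_transpose]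

lemma mulVec_dot [Fintype N] [Fintype ι] (U : Matrix N ι ℝ) (a : ι → ℝ) (w : N → ℝ) :
    (U *ᵥ a) ⬝ᵥ w = a ⬝ᵥ (Uᵀ *ᵥ w) := by
  rw [Matrix.dotProduct_mulVec, Matrix.vecMul_transpose]

lemma qf_equiv [Fintype N] [Fintype ι] (e : ι ≃ N) (B : Matrix N N ℝ) (v : ι → ℝ) :
    v ⬝ᵥ (B.submatrix ⇑e ⇑e) *ᵥ v = (v ∘ ⇑e.symm) ⬝ᵥ B *ᵥ (v ∘ ⇑e.symm) := by
  rw [Matrix.submatrix_mulVec_equiv]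
  exact Fintype.sum_equiv e _ _ (fun i => by simp)

lemma qf_elim_inl [Fintype ι₁] [Fintype ι₂] (B : Matrix (ι₁ ⊕ ι₂) (ι₁ ⊕ ι₂) ℝ) (x : ι₁ → ℝ) :
    Sum.elim x 0 ⬝ᵥ B *ᵥ Sum.elim x 0 = x ⬝ᵥ (B.submatrix Sum.inl Sum.inl) *ᵥ x := by
  simp [Matrix.mulVec, dotProduct, Fintype.sum_sum_type]

lemma qf_fromBlocks [Fintype ι₁] [Fintype ι₂] (A : Matrix ι₁ ι₁ ℝ) (B : Matrix ι₂ ι₂ ℝ)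
    (x : ι₁ → ℝ) (y : ι₂ → ℝ) :
    Sum.elim x y ⬝ᵥ (fromBlocks A 0 0 B) *ᵥ Sum.elim x y = x ⬝ᵥ A *ᵥ x + y ⬝ᵥ B *ᵥ y := by
  rw [Matrix.fromBlocks_mulVec]
  simp [sumElim_dotProduct_sumElim]

lemma submatrix_row_mulVec [Fintype ι₂] {κ : Type*} (B : Matrix ι₁ ι₂ ℝ) (f : κ → ι₁) (c : ι₂ → ℝ) :
    B.submatrix f _root_.id *ᵥ c = (B *ᵥ c) ∘ f := rfl


/-- The core dualization lemma. -/

lemma core [Fintype N] [Fintype ι₁] [Fintype ι₂] [Fintype ι₃]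
    [DecidableEq N] [DecidableEq ι₁] [DecidableEq ι₂] [DecidableEq ι₃]
    (A : Matrix N N ℝ) (hAs : Aᵀ = A) (hAu : IsUnit A.det)
    (hcard : Fintype.card ι₁ + Fintype.card ι₂ = Fintype.card N)
    (U : Matrix N ι₁ ℝ) (X : Matrix N ι₂ ℝ) (V : Matrix N ι₃ ℝ)
    (hU : ∀ a : ι₁ → ℝ, a ≠ 0 → (U *ᵥ a) ⬝ᵥ A *ᵥ (U *ᵥ a) < 0)
    (hX : ∀ b : ι₂ → ℝ, b ≠ 0 → 0 < (X *ᵥ b) ⬝ᵥ A *ᵥ (X *ᵥ b))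
    (hUV : Uᵀ * V = 0)
    (hVinj : Function.Injective V.mulVec) :
    (Vᵀ * A⁻¹ * V).PosDef := by
  have hAinv : A * A⁻¹ = 1 := Matrix.mul_nonsing_inv A hAu
  have hAsymm_inv : (A⁻¹)ᵀ = A⁻¹ := by
    rw [Matrix.transpose_nonsing_inv, hAs]
  -- the combined square matrix
  have hce : Fintype.card (ι₁ ⊕ ι₂) = Fintype.card N := by
    simpa [Fintype.card_sum] using hcard
  obtain ⟨e⟩ := Fintype.truncEquivOfCardEq hce
  set C : Matrix N N ℝ := (fromCols U X).submatrix _root_.id ⇑e.symm with hC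
  have hCmv : ∀ c : N → ℝ, C *ᵥ c = U *ᵥ (c ∘ ⇑e ∘ Sum.inl) + X *ᵥ (c ∘ ⇑e ∘ Sum.inr) := by
    intro c
    rw [hC, Matrix.submatrix_mulVec_equiv]
    have : c ∘ ⇑e.symm.symm = Sum.elim (c ∘ ⇑e ∘ Sum.inl) (c ∘ ⇑e ∘ Sum.inr) := by
      funext i; rcases i with i | i <;> simp
    rw [this, Matrix.fromCols_mulVec_sumElim]
    rfl
  -- injectivity of the pair, from definiteness
  have hpair : ∀ (a : ι₁ → ℝ) (b : ι₂ → ℝ), U *ᵥ a + X *ᵥ b = 0 → a = 0 ∧ b = 0 := by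
    intro a b hab
    have h1 : U *ᵥ a = -(X *ᵥ b) := by linear_combination (norm := module) hab
    have h2 : (U *ᵥ a) ⬝ᵥ A *ᵥ (U *ᵥ a) = (X *ᵥ b) ⬝ᵥ A *ᵥ (X *ᵥ b) := by
      rw [h1, Matrix.mulVec_neg, dotProduct_neg, neg_dotProduct, neg_neg]
    by_cases ha : a = 0
    · refine ⟨ha, ?_⟩
      by_contra hb
      have := hX b hb
      rw [← h2, ha, Matrix.mulVec_zero, zero_dotProduct] at this
      exact lt_irrefl _ this
    · exfalso
      have hneg := hU a ha
      by_cases hb : b = 0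
      · rw [hb, Matrix.mulVec_zero, zero_dotProduct] at h2
        rw [h2] at hneg; exact lt_irrefl _ hneg
      · have := hX b hb; rw [← h2] at this; linarith
  have hCinj : Function.Injective C.mulVec := by
    intro c₁ c₂ h
    have hz : C *ᵥ (c₁ - c₂) = 0 := by
      rw [Matrix.mulVec_sub, h, sub_self]
    rw [hCmv] at hz
    obtain ⟨h1, h2⟩ := hpair _ _ hz
    have hz2 : c₁ - c₂ = 0 := by
      funext i
      have hi := e.apply_symm_apply i
      show (c₁ - c₂) i = 0
      rcases hsi : e.symm i with j | j
      · rw [hsi] at hi; rw [← hi]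
        exact congrFun h1 j
      · rw [hsi] at hi; rw [← hi]
        exact congrFun h2 j
    exact sub_eq_zero.mp hz2
  have hCsurj : Function.Surjective C.mulVec :=
    Matrix.mulVec_surjective_iff_isUnit.mpr (Matrix.mulVec_injective_iff_isUnit.mp hCinj)
  -- main argument
  apply posDef_of
  · rw [Matrix.transpose_mul, Matrix.transpose_mul, Matrix.transpose_transpose, hAsymm_inv,
      Matrix.mul_assoc]
  intro y hy
  set v : N → ℝ := V *ᵥ y with hv
  have hvne : v ≠ 0 := by
    intro h0
    exact hy (hVinj (by rw [← hv, h0, Matrix.mulVec_zero]))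
  set x : N → ℝ := A⁻¹ *ᵥ v with hx
  have hAx : A *ᵥ x = v := by
    rw [hx, Matrix.mulVec_mulVec, hAinv, Matrix.one_mulVec]
  have hxne : x ≠ 0 := by
    intro h0; apply hvne; rw [← hAx, h0, Matrix.mulVec_zero]
  obtain ⟨c, hc⟩ := hCsurj x
  rw [hCmv] at hc
  set a : ι₁ → ℝ := c ∘ ⇑e ∘ Sum.inl
  set b : ι₂ → ℝ := c ∘ ⇑e ∘ Sum.inr
  -- orthogonality
  have horth : (U *ᵥ a) ⬝ᵥ v = 0 := by
    rw [hv, mulVec_dot, Matrix.mulVec_mulVec, hUV]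
    simp
  have hkey : (U *ᵥ a) ⬝ᵥ A *ᵥ x = 0 := by rw [hAx]; exact horth
  have hexp : (U *ᵥ a) ⬝ᵥ A *ᵥ (U *ᵥ a) + (U *ᵥ a) ⬝ᵥ A *ᵥ (X *ᵥ b) = 0 := by
    rw [← hkey, ← hc, Matrix.mulVec_add, dotProduct_add]
  have hq : x ⬝ᵥ A *ᵥ x
      = (X *ᵥ b) ⬝ᵥ A *ᵥ (X *ᵥ b) - (U *ᵥ a) ⬝ᵥ A *ᵥ (U *ᵥ a) := by
    have hcross : (X *ᵥ b) ⬝ᵥ A *ᵥ (U *ᵥ a) = (U *ᵥ a) ⬝ᵥ A *ᵥ (X *ᵥ b) :=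
      dot_symm A hAs _ _
    calc x ⬝ᵥ A *ᵥ x
        = (U *ᵥ a) ⬝ᵥ A *ᵥ (U *ᵥ a) + (U *ᵥ a) ⬝ᵥ A *ᵥ (X *ᵥ b)
          + ((X *ᵥ b) ⬝ᵥ A *ᵥ (U *ᵥ a) + (X *ᵥ b) ⬝ᵥ A *ᵥ (X *ᵥ b)) := by
          rw [← hc]
          simp only [Matrix.mulVec_add, dotProduct_add, add_dotProduct]
          ring
      _ = (X *ᵥ b) ⬝ᵥ A *ᵥ (X *ᵥ b) - (U *ᵥ a) ⬝ᵥ A *ᵥ (U *ᵥ a) := by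
          rw [hcross]; linarith [hexp]
  have hval : y ⬝ᵥ (Vᵀ * A⁻¹ * V) *ᵥ y = x ⬝ᵥ A *ᵥ x := by
    rw [qf_congr, ← hv, ← hx]
    rw [← hAx, dotProduct_comm]
  rw [hval, hq]
  have hXb : 0 ≤ (X *ᵥ b) ⬝ᵥ A *ᵥ (X *ᵥ b) := by
    by_cases hb : b = 0
    · rw [hb]; simp
    · exact le_of_lt (hX b hb)
  by_cases ha : a = 0
  · have hb : b ≠ 0 := by
      intro hb; apply hxne; rw [← hc, ha, hb]; simp
    have := hX b hb
    rw [ha, Matrix.mulVec_zero, zero_dotProduct]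
    linarith
  · have := hU a ha
    linarith

variable {n m d : ℕ}

/-- `flipIdx` as an equivalence. -/
def flipEquiv (n m d : ℕ) : RevIdx n m d ≃ Idx n m d where
  toFun := flipIdx
  invFun := fun i => match i with
    | .inl u => .inr (.inr (.inr u))
    | .inr (.inl a) => .inr (.inr (.inl a))
    | .inr (.inr (.inl c)) => .inr (.inl c)
    | .inr (.inr (.inr p)) => .inl p
  left_inv := by rintro (p | (p | (p | p))) <;> rfl
  right_inv := by rintro (u | (a | (c | p))) <;> rfl

/-- `phiIdx` as an equivalence. -/
def phiEquiv (n m d : ℕ) : OmIdx n m d ≃ (EtaIdx n ⊕ (RevIdx n m d ⊕ Idx n m d)) where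
  toFun := phiIdx
  invFun := fun i => match i with
    | .inl (.inl u) => .inl (.inl u)
    | .inl (.inr a) => .inl (.inr (.inl a))
    | .inr (.inl (.inl b)) => .inl (.inr (.inr b))
    | .inr (.inl (.inr v)) => .inr (.inl v)
    | .inr (.inr q) => .inr (.inr q)
  left_inv := by rintro ((u | (a | b)) | (v | q)) <;> rfl
  right_inv := by rintro ((u | a) | ((b | v) | q)) <;> rfl

/-- The lead ⊕ tail decomposition of `Idx`. -/
def epsEquiv (n m d : ℕ) : ((Unit ⊕ (Fin n ⊕ Fin m)) ⊕ Fin d) ≃ Idx n m d where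
  toFun := Sum.elim leadIdx tailIdx
  invFun := fun i => match i with
    | .inl u => .inl (.inl u)
    | .inr (.inl a) => .inl (.inr (.inl a))
    | .inr (.inr (.inl c)) => .inl (.inr (.inr c))
    | .inr (.inr (.inr p)) => .inr p
  left_inv := by rintro ((u | (a | c)) | p) <;> rfl
  right_inv := by rintro (u | (a | (c | p))) <;> rfl

def bigD (P : Matrix (EtaIdx n) (EtaIdx n) ℝ) (M Q : Matrix (Idx n m d) (Idx n m d) ℝ) :
    Matrix (EtaIdx n ⊕ (RevIdx n m d ⊕ Idx n m d)) (EtaIdx n ⊕ (RevIdx n m d ⊕ Idx n m d)) ℝ :=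
  fromBlocks (-P) 0 0 (fromBlocks (revMat M) 0 0 Q)

lemma calP_eq (P : Matrix (EtaIdx n) (EtaIdx n) ℝ) (M Q : Matrix (Idx n m d) (Idx n m d) ℝ) :
    calP P M Q = (bigD P M Q).submatrix ⇑(phiEquiv n m d) ⇑(phiEquiv n m d) := rfl

lemma revMat_eq (M : Matrix (Idx n m d) (Idx n m d) ℝ) :
    revMat M = M.submatrix ⇑(flipEquiv n m d) ⇑(flipEquiv n m d) := rfl

lemma revMat_mul (A B : Matrix (Idx n m d) (Idx n m d) ℝ) :
    revMat A * revMat B = revMat (A * B) := by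
  rw [revMat_eq, revMat_eq, Matrix.submatrix_mul_equiv, ← revMat_eq]

lemma calP_mul_inv (P : Matrix (EtaIdx n) (EtaIdx n) ℝ) (M Q : Matrix (Idx n m d) (Idx n m d) ℝ)
    (hP : IsUnit P.det) (hM : IsUnit M.det) (hQ : IsUnit Q.det) :
    calP P M Q * calP P⁻¹ M⁻¹ Q⁻¹ = 1 := by
  rw [calP_eq, calP_eq, Matrix.submatrix_mul_equiv]
  have h1 : bigD P M Q * bigD P⁻¹ M⁻¹ Q⁻¹ = 1 := by
    unfold bigD
    rw [Matrix.fromBlocks_multiply, Matrix.fromBlocks_multiply]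
    rw [revMat_mul, Matrix.mul_nonsing_inv M hM, Matrix.mul_nonsing_inv Q hQ]
    have : revMat (1 : Matrix (Idx n m d) (Idx n m d) ℝ) = 1 := by
      rw [revMat_eq, Matrix.submatrix_one_equiv]
    rw [this]
    rw [neg_mul_neg, Matrix.mul_nonsing_inv P hP]
    simp only [Matrix.zero_mul, Matrix.mul_zero, add_zero, zero_add, Matrix.neg_mul,
      Matrix.mul_neg, neg_zero, Matrix.fromBlocks_one]
  rw [h1, Matrix.submatrix_one_equiv]

lemma calP_isUnit (P : Matrix (EtaIdx n) (EtaIdx n) ℝ) (M Q : Matrix (Idx n m d) (Idx n m d) ℝ)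
    (hP : IsUnit P.det) (hM : IsUnit M.det) (hQ : IsUnit Q.det) :
    IsUnit (calP P M Q).det :=
  Matrix.isUnit_det_of_right_inverse (calP_mul_inv P M Q hP hM hQ)

lemma calP_inv (P : Matrix (EtaIdx n) (EtaIdx n) ℝ) (M Q : Matrix (Idx n m d) (Idx n m d) ℝ)
    (hP : IsUnit P.det) (hM : IsUnit M.det) (hQ : IsUnit Q.det) :
    (calP P M Q)⁻¹ = calP P⁻¹ M⁻¹ Q⁻¹ :=
  Matrix.inv_eq_right_inv (calP_mul_inv P M Q hP hM hQ)

lemma calP_transpose (P : Matrix (EtaIdx n) (EtaIdx n) ℝ) (M Q : Matrix (Idx n m d) (Idx n m d) ℝ)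
    (hP : Pᵀ = P) (hM : Mᵀ = M) (hQ : Qᵀ = Q) : (calP P M Q)ᵀ = calP P M Q := by
  unfold calP revMat
  simp [Matrix.transpose_submatrix, Matrix.fromBlocks_transpose, hP, hM, hQ]

/-- The master quadratic-form decomposition for `calP`. -/
lemma qf_calP_elim (P : Matrix (EtaIdx n) (EtaIdx n) ℝ) (M Q : Matrix (Idx n m d) (Idx n m d) ℝ)
    (w : OmIdx n m d → ℝ) (p : EtaIdx n → ℝ) (r s : Idx n m d → ℝ)
    (hw : w ∘ ⇑(phiEquiv n m d).symm = Sum.elim p (Sum.elim (r ∘ flipIdx) s)) :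
    w ⬝ᵥ calP P M Q *ᵥ w = -(p ⬝ᵥ P *ᵥ p) + (r ⬝ᵥ M *ᵥ r + s ⬝ᵥ Q *ᵥ s) := by
  rw [calP_eq, qf_equiv, hw]
  unfold bigD
  rw [qf_fromBlocks, qf_fromBlocks]
  have h1 : p ⬝ᵥ (-P) *ᵥ p = -(p ⬝ᵥ P *ᵥ p) := by
    rw [Matrix.neg_mulVec, dotProduct_neg]
  have h2 : (r ∘ flipIdx) ⬝ᵥ revMat M *ᵥ (r ∘ flipIdx) = r ⬝ᵥ M *ᵥ r := by
    rw [revMat_eq, qf_equiv]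
    have : (r ∘ flipIdx) ∘ ⇑(flipEquiv n m d).symm = r := by
      funext i
      exact congrArg r ((flipEquiv n m d).apply_symm_apply i)
    rw [this]
  rw [h1, h2]

/-! vectors -/

/-- The vector `ξ(z) = (τ, a, k¹τ + K²a, b)`. -/
def xiVec (k1 : Fin m → ℝ) (K2 : Matrix (Fin m) (Fin n) ℝ) (z : TabIdx n d → ℝ) :
    Idx n m d → ℝ
  | .inl _ => z (.inl ())
  | .inr (.inl j) => z (.inr (.inl j))
  | .inr (.inr (.inl i)) => k1 i * z (.inl ()) + ∑ j, K2 i j * z (.inr (.inl j))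
  | .inr (.inr (.inr j)) => z (.inr (.inr j))

/-- The vector `η(z) = (τ, a)`. -/
def etaVec (z : TabIdx n d → ℝ) : EtaIdx n → ℝ
  | .inl _ => z (.inl ())
  | .inr j => z (.inr (.inl j))

lemma Wmat_mulVec (k1 : Fin m → ℝ) (K2 : Matrix (Fin m) (Fin n) ℝ) (z : TabIdx n d → ℝ) :
    Wmat (n := n) (m := m) (d := d) k1 K2 *ᵥ z
      = Sum.elim (fun v => xiVec k1 K2 z (flipIdx (Sum.inr v))) (xiVec k1 K2 z) := by
  funext r
  rcases r with (i | (j | u)) | (u | (j | (i | j))) <;>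
    simp [Wmat, Matrix.mulVec, dotProduct, Fintype.sum_sum_type, xiVec, flipIdx,
      ite_mul, Finset.sum_ite_eq, Finset.sum_ite_eq']

lemma calW_mulVec (k1 : Fin m → ℝ) (K2 : Matrix (Fin m) (Fin n) ℝ) (z : TabIdx n d → ℝ) :
    calW (n := n) (m := m) (d := d) k1 K2 *ᵥ z
      = Sum.elim z (Wmat k1 K2 *ᵥ z) := by
  unfold calW
  rw [Matrix.fromRows_mulVec, Matrix.one_mulVec]

lemma calW_image (k1 : Fin m → ℝ) (K2 : Matrix (Fin m) (Fin n) ℝ) (z : TabIdx n d → ℝ) :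
    (calW (n := n) (m := m) (d := d) k1 K2 *ᵥ z) ∘ ⇑(phiEquiv n m d).symm
      = Sum.elim (etaVec z) (Sum.elim (xiVec k1 K2 z ∘ flipIdx) (xiVec k1 K2 z)) := by
  rw [calW_mulVec, Wmat_mulVec]
  funext I
  rcases I with (u | a) | ((b | v) | q) <;> rfl

/-- Standard-basis column-selection matrix. -/
def embMat {N κ : Type*} [Fintype N] [DecidableEq N] (f : κ → N) : Matrix N κ ℝ :=
  (1 : Matrix N N ℝ).submatrix _root_.id f

lemma conj_emb {N κ : Type*} [Fintype N] [DecidableEq N] (B : Matrix N N ℝ) (f : κ → N) :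
    (embMat f)ᵀ * B * embMat f = B.submatrix f f := by
  unfold embMat
  have h1 : B * (1 : Matrix N N ℝ).submatrix _root_.id f = B.submatrix _root_.id f := by
    have := Matrix.mul_submatrix_one (Equiv.refl N) f B
    simpa using this
  have h2 : ((1 : Matrix N N ℝ).submatrix _root_.id f)ᵀ = (1 : Matrix N N ℝ).submatrix f _root_.id := by
    rw [Matrix.transpose_submatrix, Matrix.transpose_one]
  rw [Matrix.mul_assoc, h1, h2]
  have := Matrix.one_submatrix_mul (M := B.submatrix _root_.id f) f (Equiv.refl N)
  simpa using this

def extLead (c : (Unit ⊕ (Fin n ⊕ Fin m)) → ℝ) : Idx n m d → ℝ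
  | .inl _ => c (.inl ())
  | .inr (.inl a) => c (.inr (.inl a))
  | .inr (.inr (.inl i)) => c (.inr (.inr i))
  | .inr (.inr (.inr _)) => 0

def extTail (c : Fin d → ℝ) : Idx n m d → ℝ
  | .inr (.inr (.inr j)) => c j
  | _ => 0

lemma embMat_lead_mulVec (c : (Unit ⊕ (Fin n ⊕ Fin m)) → ℝ) :
    embMat (leadIdx (n := n) (m := m) (d := d)) *ᵥ c = extLead c := by
  funext i
  rcases i with u | (a | (i | p)) <;>
    simp [embMat, Matrix.mulVec, dotProduct, Fintype.sum_sum_type, Matrix.one_apply,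
      leadIdx, extLead, ite_mul, Finset.sum_ite_eq, Finset.sum_ite_eq']

lemma embMat_tail_mulVec (c : Fin d → ℝ) :
    embMat (tailIdx (n := n) (m := m) (d := d)) *ᵥ c = extTail c := by
  funext i
  rcases i with u | (a | (i | p)) <;>
    simp [embMat, Matrix.mulVec, dotProduct, Matrix.one_apply, tailIdx, extTail,
      ite_mul, Finset.sum_ite_eq, Finset.sum_ite_eq']

lemma extLead_elim (c : (Unit ⊕ (Fin n ⊕ Fin m)) → ℝ) :
    extLead (n := n) (m := m) (d := d) c
      = (Sum.elim c (0 : Fin d → ℝ)) ∘ ⇑(epsEquiv n m d).symm := by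
  funext i; rcases i with u | (a | (i | p)) <;> rfl

lemma extTail_elim (c : Fin d → ℝ) :
    extTail (n := n) (m := m) (d := d) c
      = (Sum.elim (0 : (Unit ⊕ (Fin n ⊕ Fin m)) → ℝ) c) ∘ ⇑(epsEquiv n m d).symm := by
  funext i; rcases i with u | (a | (i | p)) <;> rfl

lemma qf_elim_inr {ι₁ ι₂ : Type*} [Fintype ι₁] [Fintype ι₂]
    (B : Matrix (ι₁ ⊕ ι₂) (ι₁ ⊕ ι₂) ℝ) (x : ι₂ → ℝ) :
    Sum.elim 0 x ⬝ᵥ B *ᵥ Sum.elim 0 x = x ⬝ᵥ (B.submatrix Sum.inr Sum.inr) *ᵥ x := by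
  simp [Matrix.mulVec, dotProduct, Fintype.sum_sum_type]

lemma qf_extLead (M : Matrix (Idx n m d) (Idx n m d) ℝ) (c : (Unit ⊕ (Fin n ⊕ Fin m)) → ℝ) :
    extLead (n := n) (m := m) (d := d) c ⬝ᵥ M *ᵥ extLead c
      = c ⬝ᵥ (M.submatrix leadIdx leadIdx) *ᵥ c := by
  rw [extLead_elim, ← qf_equiv (epsEquiv n m d), qf_elim_inl, Matrix.submatrix_submatrix]
  rfl

lemma qf_extTail (M : Matrix (Idx n m d) (Idx n m d) ℝ) (c : Fin d → ℝ) :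
    extTail (n := n) (m := m) (d := d) c ⬝ᵥ M *ᵥ extTail c
      = c ⬝ᵥ (M.submatrix tailIdx tailIdx) *ᵥ c := by
  rw [extTail_elim, ← qf_equiv (epsEquiv n m d), qf_elim_inr, Matrix.submatrix_submatrix]
  rfl

/-! assembling matrices for the positive/negative complements -/

lemma comp_phi_symm {α : Type*} (g : (EtaIdx n ⊕ (RevIdx n m d ⊕ Idx n m d)) → α) :
    (g ∘ phiIdx (n := n) (m := m) (d := d)) ∘ ⇑(phiEquiv n m d).symm = g := by
  funext I
  exact congrArg g ((phiEquiv n m d).apply_symm_apply I)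

def fwdX (n m d : ℕ) : Matrix (OmIdx n m d) ((Unit ⊕ (Fin n ⊕ Fin m)) ⊕ Idx n m d) ℝ :=
  (fromBlocks (0 : Matrix (EtaIdx n) (Unit ⊕ (Fin n ⊕ Fin m)) ℝ) 0
    (fromRows ((embMat (leadIdx (n := n) (m := m) (d := d))).submatrix flipIdx _root_.id) 0)
    (fromRows 0 1)).submatrix phiIdx _root_.id

lemma fwdX_mulVec (c₁ : (Unit ⊕ (Fin n ⊕ Fin m)) → ℝ) (c₂ : Idx n m d → ℝ) :
    fwdX n m d *ᵥ Sum.elim c₁ c₂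
      = (Sum.elim (0 : EtaIdx n → ℝ)
          (Sum.elim (extLead (n := n) (m := m) (d := d) c₁ ∘ flipIdx) c₂)) ∘ phiIdx := by
  unfold fwdX
  rw [submatrix_row_mulVec, Matrix.fromBlocks_mulVec]
  funext i
  simp only [Function.comp_apply]
  generalize phiIdx i = J
  rcases J with p | (r | q)
  · simp
  · simp [Matrix.fromRows_mulVec, submatrix_row_mulVec, embMat_lead_mulVec]
  · simp [Matrix.fromRows_mulVec]

def bwdX (n m d : ℕ) : Matrix (OmIdx n m d) (EtaIdx n ⊕ Fin d) ℝ :=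
  (fromBlocks (1 : Matrix (EtaIdx n) (EtaIdx n) ℝ) 0
    0 (fromRows ((embMat (tailIdx (n := n) (m := m) (d := d))).submatrix flipIdx _root_.id) 0)
    ).submatrix phiIdx _root_.id

lemma bwdX_mulVec (c₁ : EtaIdx n → ℝ) (c₂ : Fin d → ℝ) :
    bwdX n m d *ᵥ Sum.elim c₁ c₂
      = (Sum.elim c₁
          (Sum.elim (extTail (n := n) (m := m) (d := d) c₂ ∘ flipIdx) 0)) ∘ phiIdx := by
  unfold bwdX
  rw [submatrix_row_mulVec, Matrix.fromBlocks_mulVec]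
  funext i
  simp only [Function.comp_apply]
  generalize phiIdx i = J
  rcases J with p | (r | q)
  · simp
  · simp [Matrix.fromRows_mulVec, submatrix_row_mulVec, embMat_tail_mulVec]
  · simp [Matrix.fromRows_mulVec]

lemma calD_mulVec (k1 : Fin m → ℝ) (K2 : Matrix (Fin m) (Fin n) ℝ) (y : WIdx n m d → ℝ) :
    calD (n := n) (m := m) (d := d) k1 K2 *ᵥ y = Sum.elim ((Wmat k1 K2)ᵀ *ᵥ y) (-y) := by
  unfold calD
  rw [Matrix.fromRows_mulVec, Matrix.neg_mulVec, Matrix.one_mulVec]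

lemma calW_inj (k1 : Fin m → ℝ) (K2 : Matrix (Fin m) (Fin n) ℝ) :
    Function.Injective (calW (n := n) (m := m) (d := d) k1 K2).mulVec := by
  intro y₁ y₂ h
  rw [calW_mulVec, calW_mulVec] at h
  funext t
  exact congrFun h (Sum.inl t)

lemma calD_inj (k1 : Fin m → ℝ) (K2 : Matrix (Fin m) (Fin n) ℝ) :
    Function.Injective (calD (n := n) (m := m) (d := d) k1 K2).mulVec := by
  intro y₁ y₂ h
  rw [calD_mulVec, calD_mulVec] at h
  funext t
  have := congrFun h (Sum.inr t)
  simpa using this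

lemma calD_T_mul_calW (k1 : Fin m → ℝ) (K2 : Matrix (Fin m) (Fin n) ℝ) :
    (calD (n := n) (m := m) (d := d) k1 K2)ᵀ * calW (n := n) (m := m) (d := d) k1 K2 = 0 := by
  unfold calD calW
  rw [Matrix.transpose_fromRows, Matrix.transpose_transpose, Matrix.transpose_neg,
    Matrix.transpose_one, Matrix.fromCols_mul_fromRows]
  simp [Matrix.neg_mul]

lemma calW_T_mul_calD (k1 : Fin m → ℝ) (K2 : Matrix (Fin m) (Fin n) ℝ) :
    (calW (n := n) (m := m) (d := d) k1 K2)ᵀ * calD (n := n) (m := m) (d := d) k1 K2 = 0 := by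
  unfold calD calW
  rw [Matrix.transpose_fromRows, Matrix.transpose_one, Matrix.fromCols_mul_fromRows]
  simp [Matrix.mul_neg]

lemma emb_lead_T_mul_tail :
    (embMat (leadIdx (n := n) (m := m) (d := d)))ᵀ * embMat (tailIdx (n := n) (m := m) (d := d))
      = 0 := by
  ext l j
  rw [Matrix.mul_apply]
  apply Finset.sum_eq_zero
  intro I _
  simp only [Matrix.transpose_apply, embMat, Matrix.submatrix_apply, id_eq, Matrix.one_apply,
    Matrix.zero_apply]
  by_cases h : I = leadIdx l
  · subst h
    rcases l with u | (a | i) <;> simp [leadIdx, tailIdx]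
  · simp [h]

lemma embMat_tail_inj :
    Function.Injective ((embMat (tailIdx (n := n) (m := m) (d := d)))).mulVec := by
  intro b₁ b₂ h
  rw [embMat_tail_mulVec, embMat_tail_mulVec] at h
  funext j
  exact congrFun h (Sum.inr (Sum.inr (Sum.inr j)))

end BPPD

/-- **Primal–dual equivalence of the backward-pass LMI** (Section 4.2 of the
paper): under the regularity condition (15), the primal matrix inequality
`𝒲ᵀ𝒫𝒲 ≺ 0` holds iff the dual inequality `𝒟ᵀ𝒫⁻¹𝒟 ≻ 0` holds together with
`P⁻¹ ≻ 0` and negative definiteness of the `(δw,δw)` block of `M⁻¹`. -/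
theorem backward_pass_primal_dual_equivalence
    (n m d : ℕ)
    (P : Matrix (EtaIdx n) (EtaIdx n) ℝ)
    (hPsymm : P.IsSymm) (hPinv : IsUnit P.det)
    (M Q : Matrix (Idx n m d) (Idx n m d) ℝ)
    (hMsymm : M.IsSymm) (hMinv : IsUnit M.det)
    (hQsymm : Q.IsSymm) (hQinv : IsUnit Q.det)
    (k1 : Fin m → ℝ) (K2 : Matrix (Fin m) (Fin n) ℝ)
    (hreg1 : (M.submatrix (leadIdx (n := n) (m := m) (d := d))
        (leadIdx (n := n) (m := m) (d := d))).PosDef)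
    (hreg2 : Q.PosDef) :
    (-((calW (n := n) (m := m) (d := d) k1 K2)ᵀ * calP P M Q *
        calW (n := n) (m := m) (d := d) k1 K2)).PosDef ↔
      (((calD (n := n) (m := m) (d := d) k1 K2)ᵀ * (calP P M Q)⁻¹ *
          calD (n := n) (m := m) (d := d) k1 K2).PosDef ∧
        (P⁻¹).PosDef ∧
        (-((M⁻¹).submatrix (tailIdx (n := n) (m := m) (d := d))
            (tailIdx (n := n) (m := m) (d := d)))).PosDef) := by
  classical
  have hPs : Pᵀ = P := hPsymm
  have hMs : Mᵀ = M := hMsymm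
  have hQs : Qᵀ = Q := hQsymm
  have hPt : (calP P M Q)ᵀ = calP P M Q := BPPD.calP_transpose P M Q hPs hMs hQs
  have hPu : IsUnit (calP P M Q).det := BPPD.calP_isUnit P M Q hPinv hMinv hQinv
  have hWD : (calW (n := n) (m := m) (d := d) k1 K2)ᵀ * calD (n := n) (m := m) (d := d) k1 K2
      = 0 := BPPD.calW_T_mul_calD k1 K2
  have hDW : (calD (n := n) (m := m) (d := d) k1 K2)ᵀ * calW (n := n) (m := m) (d := d) k1 K2
      = 0 := BPPD.calD_T_mul_calW k1 K2
  constructor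
  · intro hprim
    have hprimqf : ∀ z : TabIdx n d → ℝ, z ≠ 0 →
        (calW (n := n) (m := m) (d := d) k1 K2 *ᵥ z) ⬝ᵥ calP P M Q *ᵥ
          (calW (n := n) (m := m) (d := d) k1 K2 *ᵥ z) < 0 := by
      intro z hz
      have h := BPPD.posDef_apply hprim z hz
      rw [Matrix.neg_mulVec, dotProduct_neg, BPPD.qf_congr] at h
      linarith
    have hPpd : P.PosDef := by
      apply BPPD.posDef_of P hPs
      intro eta heta
      set z : TabIdx n d → ℝ := fun t => match t with
        | .inl _ => eta (.inl ())
        | .inr (.inl j) => eta (.inr j)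
        | .inr (.inr _) => 0 with hzdef
      have hze : BPPD.etaVec z = eta := by
        funext e; rcases e with u | j <;> rfl
      have hznz : z ≠ 0 := by
        intro h0
        apply heta
        funext e
        rcases e with u | j
        · exact congrFun h0 (Sum.inl ())
        · exact congrFun h0 (Sum.inr (Sum.inl j))
      have hq := hprimqf z hznz
      rw [BPPD.qf_calP_elim P M Q _ (BPPD.etaVec z) (BPPD.xiVec k1 K2 z)
        (BPPD.xiVec k1 K2 z) (BPPD.calW_image k1 K2 z)] at hq
      have hx_eq : BPPD.xiVec k1 K2 z
          = BPPD.extLead (fun l => BPPD.xiVec k1 K2 z (leadIdx l)) := by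
        funext i; rcases i with u | (a | (i | p)) <;> rfl
      have hM0 : 0 ≤ BPPD.xiVec k1 K2 z ⬝ᵥ M *ᵥ BPPD.xiVec k1 K2 z := by
        rw [hx_eq, BPPD.qf_extLead]
        exact BPPD.posSemidef_apply hreg1.posSemidef _
      have hQ0 : 0 ≤ BPPD.xiVec k1 K2 z ⬝ᵥ Q *ᵥ BPPD.xiVec k1 K2 z :=
        BPPD.posSemidef_apply hreg2.posSemidef _
      rw [hze] at hq
      linarith
    have hMtail : ∀ b : Fin d → ℝ, b ≠ 0 →
        BPPD.extTail (n := n) (m := m) (d := d) b ⬝ᵥ M *ᵥ BPPD.extTail b < 0 := by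
      intro b hb
      set z : TabIdx n d → ℝ := fun t => match t with
        | .inr (.inr j) => b j
        | _ => 0 with hzdef
      have hznz : z ≠ 0 := by
        intro h0
        apply hb
        funext j
        exact congrFun h0 (Sum.inr (Sum.inr j))
      have hxi : BPPD.xiVec k1 K2 z = BPPD.extTail b := by
        funext i; rcases i with u | (a | (i | p)) <;> simp [BPPD.xiVec, BPPD.extTail, hzdef]
      have heta0 : BPPD.etaVec z = 0 := by
        funext e; rcases e with u | j <;> rfl
      have hq := hprimqf z hznz
      rw [BPPD.qf_calP_elim P M Q _ (BPPD.etaVec z) (BPPD.xiVec k1 K2 z)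
        (BPPD.xiVec k1 K2 z) (BPPD.calW_image k1 K2 z), hxi, heta0] at hq
      have hQpos : 0 < BPPD.extTail (n := n) (m := m) (d := d) b ⬝ᵥ Q *ᵥ BPPD.extTail b := by
        apply BPPD.posDef_apply hreg2
        intro h0
        apply hb
        funext j
        exact congrFun h0 (Sum.inr (Sum.inr (Sum.inr j)))
      have h0P : (0 : EtaIdx n → ℝ) ⬝ᵥ P *ᵥ (0 : EtaIdx n → ℝ) = 0 :=
        zero_dotProduct _
      rw [h0P] at hq
      linarith
    have hcardA : Fintype.card (TabIdx n d)
        + Fintype.card ((Unit ⊕ (Fin n ⊕ Fin m)) ⊕ Idx n m d)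
        = Fintype.card (OmIdx n m d) := by
      simp only [Fintype.card_sum, Fintype.card_unit, Fintype.card_fin]
      omega
    have hXa : ∀ b : ((Unit ⊕ (Fin n ⊕ Fin m)) ⊕ Idx n m d) → ℝ, b ≠ 0 →
        0 < (BPPD.fwdX n m d *ᵥ b) ⬝ᵥ calP P M Q *ᵥ (BPPD.fwdX n m d *ᵥ b) := by
      intro b hb
      have hbe : Sum.elim (b ∘ Sum.inl) (b ∘ Sum.inr) = b := Sum.elim_comp_inl_inr b
      rw [← hbe, BPPD.fwdX_mulVec,
        BPPD.qf_calP_elim P M Q _ 0 (BPPD.extLead (b ∘ Sum.inl)) (b ∘ Sum.inr)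
          (BPPD.comp_phi_symm _), BPPD.qf_extLead, zero_dotProduct, neg_zero, zero_add]
      have hcc : b ∘ Sum.inl ≠ 0 ∨ b ∘ Sum.inr ≠ 0 := by
        by_contra hcon
        push_neg at hcon
        apply hb
        rw [← hbe, hcon.1, hcon.2]
        funext i; rcases i with i | i <;> rfl
      have h1 : 0 ≤ (b ∘ Sum.inl) ⬝ᵥ (M.submatrix leadIdx leadIdx) *ᵥ (b ∘ Sum.inl) :=
        BPPD.posSemidef_apply hreg1.posSemidef _
      have h2 : 0 ≤ (b ∘ Sum.inr) ⬝ᵥ Q *ᵥ (b ∘ Sum.inr) :=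
        BPPD.posSemidef_apply hreg2.posSemidef _
      rcases hcc with hcc | hcc
      · have := BPPD.posDef_apply hreg1 _ hcc; linarith
      · have := BPPD.posDef_apply hreg2 _ hcc; linarith
    refine ⟨?_, hPpd.inv, ?_⟩
    · exact BPPD.core (calP P M Q) hPt hPu hcardA (calW k1 K2) (BPPD.fwdX n m d)
        (calD k1 K2) hprimqf hXa hWD (BPPD.calD_inj k1 K2)
    · have hMneg1 : (-M) * (-M⁻¹) = 1 := by
        rw [neg_mul_neg, Matrix.mul_nonsing_inv M hMinv]
      have hMnegT : (-M)ᵀ = -M := by rw [Matrix.transpose_neg, hMs]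
      have hMnegU : IsUnit (-M).det := Matrix.isUnit_det_of_right_inverse hMneg1
      have hcardM : Fintype.card (Unit ⊕ (Fin n ⊕ Fin m)) + Fintype.card (Fin d)
          = Fintype.card (Idx n m d) := by
        simp only [Fintype.card_sum, Fintype.card_unit, Fintype.card_fin]
        omega
      have hU2 : ∀ a : (Unit ⊕ (Fin n ⊕ Fin m)) → ℝ, a ≠ 0 →
          (BPPD.embMat (leadIdx (n := n) (m := m) (d := d)) *ᵥ a) ⬝ᵥ (-M) *ᵥ
            (BPPD.embMat (leadIdx (n := n) (m := m) (d := d)) *ᵥ a) < 0 := by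
        intro a ha
        rw [BPPD.embMat_lead_mulVec, Matrix.neg_mulVec, dotProduct_neg, BPPD.qf_extLead]
        have := BPPD.posDef_apply hreg1 a ha
        linarith
      have hX2 : ∀ b : Fin d → ℝ, b ≠ 0 →
          0 < (BPPD.embMat (tailIdx (n := n) (m := m) (d := d)) *ᵥ b) ⬝ᵥ (-M) *ᵥ
            (BPPD.embMat (tailIdx (n := n) (m := m) (d := d)) *ᵥ b) := by
        intro b hb
        rw [BPPD.embMat_tail_mulVec, Matrix.neg_mulVec, dotProduct_neg]
        have := hMtail b hb
        linarith
      have hcore := BPPD.core (-M) hMnegT hMnegU hcardM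
        (BPPD.embMat (leadIdx (n := n) (m := m) (d := d)))
        (BPPD.embMat (tailIdx (n := n) (m := m) (d := d)))
        (BPPD.embMat (tailIdx (n := n) (m := m) (d := d))) hU2 hX2
        BPPD.emb_lead_T_mul_tail BPPD.embMat_tail_inj
      have hMneginv : (-M)⁻¹ = -M⁻¹ := Matrix.inv_eq_right_inv hMneg1
      rw [hMneginv, Matrix.mul_neg, Matrix.neg_mul, BPPD.conj_emb] at hcore
      exact hcore
  · rintro ⟨hdual, hbinv, hcblk⟩
    have hA1 : (-(calP P M Q)⁻¹) * (-(calP P M Q)) = 1 := by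
      rw [neg_mul_neg, Matrix.nonsing_inv_mul _ hPu]
    have hAT : (-(calP P M Q)⁻¹)ᵀ = -(calP P M Q)⁻¹ := by
      rw [Matrix.transpose_neg, Matrix.transpose_nonsing_inv, hPt]
    have hAU : IsUnit (-(calP P M Q)⁻¹).det := Matrix.isUnit_det_of_right_inverse hA1
    have hcardB : Fintype.card (WIdx n m d) + Fintype.card (EtaIdx n ⊕ Fin d)
        = Fintype.card (OmIdx n m d) := by
      simp only [Fintype.card_sum, Fintype.card_unit, Fintype.card_fin]
      omega
    have hU3 : ∀ a : WIdx n m d → ℝ, a ≠ 0 →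
        (calD (n := n) (m := m) (d := d) k1 K2 *ᵥ a) ⬝ᵥ (-(calP P M Q)⁻¹) *ᵥ
          (calD (n := n) (m := m) (d := d) k1 K2 *ᵥ a) < 0 := by
      intro a ha
      have h := BPPD.posDef_apply hdual a ha
      rw [BPPD.qf_congr] at h
      rw [Matrix.neg_mulVec, dotProduct_neg]
      linarith
    have hX3 : ∀ c : (EtaIdx n ⊕ Fin d) → ℝ, c ≠ 0 →
        0 < (BPPD.bwdX n m d *ᵥ c) ⬝ᵥ (-(calP P M Q)⁻¹) *ᵥ (BPPD.bwdX n m d *ᵥ c) := by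
      intro c hc
      have hce : Sum.elim (c ∘ Sum.inl) (c ∘ Sum.inr) = c := Sum.elim_comp_inl_inr c
      rw [← hce, BPPD.bwdX_mulVec, Matrix.neg_mulVec, dotProduct_neg,
        BPPD.calP_inv P M Q hPinv hMinv hQinv,
        BPPD.qf_calP_elim P⁻¹ M⁻¹ Q⁻¹ _ (c ∘ Sum.inl) (BPPD.extTail (c ∘ Sum.inr)) 0
          (BPPD.comp_phi_symm _), BPPD.qf_extTail]
      have h0Q : (0 : Idx n m d → ℝ) ⬝ᵥ Q⁻¹ *ᵥ (0 : Idx n m d → ℝ) = 0 :=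
        zero_dotProduct _
      rw [h0Q, add_zero]
      have hcc : c ∘ Sum.inl ≠ 0 ∨ c ∘ Sum.inr ≠ 0 := by
        by_contra hcon
        push_neg at hcon
        apply hc
        rw [← hce, hcon.1, hcon.2]
        funext i; rcases i with i | i <;> rfl
      have h1 : 0 ≤ (c ∘ Sum.inl) ⬝ᵥ P⁻¹ *ᵥ (c ∘ Sum.inl) :=
        BPPD.posSemidef_apply hbinv.posSemidef _
      have h2 : 0 ≤ -((c ∘ Sum.inr) ⬝ᵥ (M⁻¹.submatrix tailIdx tailIdx) *ᵥ (c ∘ Sum.inr)) := by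
        have := BPPD.posSemidef_apply hcblk.posSemidef (c ∘ Sum.inr)
        rw [Matrix.neg_mulVec, dotProduct_neg] at this
        linarith
      rcases hcc with hcc | hcc
      · have := BPPD.posDef_apply hbinv _ hcc; linarith
      · have := BPPD.posDef_apply hcblk _ hcc
        rw [Matrix.neg_mulVec, dotProduct_neg] at this
        linarith
    have hcore := BPPD.core (-(calP P M Q)⁻¹) hAT hAU hcardB
      (calD k1 K2) (BPPD.bwdX n m d) (calW k1 K2) hU3 hX3 hDW (BPPD.calW_inj k1 K2)
    have hinvinv : (-(calP P M Q)⁻¹)⁻¹ = -(calP P M Q) := Matrix.inv_eq_right_inv hA1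
    rw [hinvinv, Matrix.mul_neg, Matrix.neg_mul] at hcore
    exact hcore
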